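/- Suppose for each s ∈ ω^{<ω} a nonempty compact set C_s ⊆ ℤ^ω is given with C_{s'} ⊆ C_s whenever s ⊆ s', and suppose moreover that for every s and every nonempty relatively open U ⊆ C_s there exists ℓ ∈ ω with C_{s⌢ℓ} ⊆ U. Let K₀ be the closure in ℤ^ω × {0,1}^ω of ⋃_s C_s × {h₀(s)} (h₀ the zero-padded prefix encoding), and f₀ : K₀ → ℤ^ω the first-coordinate projection. If X ⊆ ℤ^ω satisfies that {s' ∈ ω^{<ω} : X ∩ C_{s'} = ∅} is cofinal in ω^{<ω} (every finite sequence has an extension in this set), then f₀⁻¹(X) is nowhere dense in K₀. -/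

import Mathlib

/-- The prefix encoding `h(n) = 0^n 1`, extended to finite sequences by concatenation. -/
def hWord (s : List ℕ) : List Bool :=
  (s.map fun n => List.replicate n false ++ [true]).flatten

/-- `h₀(s)` is `h(s)` padded with zeroes (`false`) to an infinite sequence. -/
def hZero (s : List ℕ) : ℕ → Bool :=
  fun i => (hWord s).getD i false


lemma hWord_cons (a : ℕ) (u : List ℕ) :
    hWord (a :: u) = (List.replicate a false ++ [true]) ++ hWord u := by
  simp [hWord]

lemma hWord_append (u v : List ℕ) : hWord (u ++ v) = hWord u ++ hWord v := by
  simp [hWord]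

lemma length_hWord_cons (a : ℕ) (u : List ℕ) :
    (hWord (a :: u)).length = a + 1 + (hWord u).length := by
  simp [hWord_cons]; omega

lemma hZero_of_le (u : List ℕ) (i : ℕ) (h : (hWord u).length ≤ i) : hZero u i = false := by
  simp [hZero, List.getD_eq_getElem?_getD, List.getElem?_eq_none h]

lemma hZero_append_lt (u v : List ℕ) (i : ℕ) (h : i < (hWord u).length) :
    hZero (u ++ v) i = hZero u i := by
  simp [hZero, hWord_append, List.getD_eq_getElem?_getD, List.getElem?_append, if_pos h]

lemma hZero_cons_lt (a : ℕ) (u : List ℕ) (i : ℕ) (h : i < a) : hZero (a :: u) i = false := by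
  simp only [hZero, hWord_cons, List.append_assoc, List.getD_eq_getElem?_getD]
  have hi : i < (List.replicate a false).length := by simpa using h
  rw [List.getElem?_append, if_pos hi]
  simp [List.getElem?_replicate, h]

lemma hZero_cons_self (a : ℕ) (u : List ℕ) : hZero (a :: u) a = true := by
  simp only [hZero, hWord_cons, List.append_assoc, List.getD_eq_getElem?_getD]
  rw [List.getElem?_append_right (by simp)]
  simp

lemma hZero_cons_shift (a : ℕ) (u : List ℕ) (j : ℕ) :
    hZero (a :: u) (a + 1 + j) = hZero u j := by
  simp only [hZero, hWord_cons, List.getD_eq_getElem?_getD]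
  rw [List.getElem?_append_right (by simp)]
  simp

lemma hZero_extend_agree (u : List ℕ) (m : ℕ) (rest : List ℕ) (i : ℕ)
    (hi : i < (hWord u).length + m) : hZero (u ++ m :: rest) i = hZero u i := by
  rcases lt_or_ge i (hWord u).length with h | h
  · exact hZero_append_lt u (m :: rest) i h
  · rw [hZero_of_le u i h]
    simp only [hZero, hWord_append, hWord_cons, List.getD_eq_getElem?_getD]
    rw [List.getElem?_append_right (by simpa using h)]
    have h2 : i - (hWord u).length < (List.replicate m false).length := by simp; omega
    rw [List.append_assoc, List.getElem?_append, if_pos h2]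
    simp [List.getElem?_replicate, (by omega : i - (hWord u).length < m)]

lemma hZero_char (u : List ℕ) : ∀ (N : ℕ) (s : List ℕ), (hWord u).length ≤ N →
    (∀ i < N, hZero s i = hZero u i) →
    s = u ∨ ∃ m rest, N ≤ (hWord u).length + m ∧ s = u ++ m :: rest := by
  induction u with
  | nil =>
    intro N s hN h
    match s with
    | [] => exact Or.inl rfl
    | m :: rest =>
      right
      refine ⟨m, rest, ?_, by simp⟩
      by_contra hc
      have hm : m < N := by simpa [hWord] using hc
      have := h m hm
      rw [hZero_cons_self, hZero_of_le [] m (by simp [hWord])] at this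
      simp at this
  | cons a u ih =>
    intro N s hN h
    rw [length_hWord_cons] at hN
    have haN : a < N := by omega
    match s with
    | [] =>
      have := h a haN
      rw [hZero_cons_self, hZero_of_le [] a (by simp [hWord])] at this
      simp at this
    | b :: s' =>
      have hab : b = a := by
        rcases lt_trichotomy b a with hba | rfl | hba
        · have := h b (lt_trans hba haN)
          rw [hZero_cons_self, hZero_cons_lt a u b hba] at this
          simp at this
        · rfl
        · have := h a haN
          rw [hZero_cons_self, hZero_cons_lt b s' a hba] at this
          simp at this
      subst hab
      have h' : ∀ j < N - (b + 1), hZero s' j = hZero u j := by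
        intro j hj
        have := h (b + 1 + j) (by omega)
        rwa [hZero_cons_shift, hZero_cons_shift] at this
      rcases ih (N - (b + 1)) s' (by omega) h' with rfl | ⟨m, rest, hm, rfl⟩
      · exact Or.inl rfl
      · exact Or.inr ⟨m, rest, by rw [length_hWord_cons]; omega, by simp⟩

lemma isOpen_cyl (c : ℕ → Bool) (N : ℕ) : IsOpen {z : ℕ → Bool | ∀ i < N, z i = c i} := by
  have : {z : ℕ → Bool | ∀ i < N, z i = c i} = Set.pi (Set.Iio N) (fun i => {c i}) := by
    ext z; simp [Set.mem_pi]
  rw [this]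
  exact isOpen_set_pi (Set.finite_Iio N) (fun i _ => isOpen_discrete _)

lemma finset_t2_sep {α : Type*} [TopologicalSpace α] [T2Space α] (t : Finset α) :
    ∃ f : α → Set α, (∀ x ∈ t, IsOpen (f x) ∧ x ∈ f x) ∧
      ∀ x ∈ t, ∀ y ∈ t, x ≠ y → Disjoint (f x) (f y) := by
  classical
  induction t using Finset.induction_on with
  | empty => exact ⟨fun _ => ∅, by simp, by simp⟩
  | @insert a s hxs ih =>
    obtain ⟨f, hf1, hf2⟩ := ih
    have h : ∀ y : α, ∃ U V : Set α, IsOpen U ∧ IsOpen V ∧ a ∈ U ∧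
        (y ∈ s → y ∈ V) ∧ (y ∈ s → Disjoint U V) := by
      intro y
      by_cases hy : y ∈ s
      · obtain ⟨U, V, hU, hV, haU, hyV, hd⟩ := t2_separation (show a ≠ y by rintro rfl; exact hxs hy)
        exact ⟨U, V, hU, hV, haU, fun _ => hyV, fun _ => hd⟩
      · exact ⟨Set.univ, Set.univ, isOpen_univ, isOpen_univ, trivial, fun h => absurd h hy,
          fun h => absurd h hy⟩
    choose U V hU hV haU hyV hd using h
    refine ⟨fun z => if z = a then ⋂ y ∈ s, U y else f z ∩ V z, ?_, ?_⟩
    · intro x hx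
      rcases Finset.mem_insert.mp hx with hxa | hx
      · simp only [if_pos hxa]
        subst hxa
        exact ⟨isOpen_biInter_finset fun y _ => hU y, Set.mem_iInter₂.mpr fun y _ => haU y⟩
      · have hne : x ≠ a := fun hxa => hxs (hxa ▸ hx)
        simp only [if_neg hne]
        exact ⟨(hf1 x hx).1.inter (hV x), (hf1 x hx).2, hyV x hx⟩
    · intro x hx y hy hxy
      rcases Finset.mem_insert.mp hx with hxa | hx <;>
        rcases Finset.mem_insert.mp hy with hya | hy
      · exact absurd (hxa.trans hya.symm) hxy
      · have hne : y ≠ a := fun hya => hxs (hya ▸ hy)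
        simp only [if_pos hxa, if_neg hne]
        exact ((hd y hy).mono (Set.biInter_subset_of_mem hy) Set.inter_subset_right).symm.symm
      · have hne : x ≠ a := fun hxa => hxs (hxa ▸ hx)
        simp only [if_pos hya, if_neg hne]
        exact ((hd x hx).mono (Set.biInter_subset_of_mem hx) Set.inter_subset_right).symm
      · have hnx : x ≠ a := fun hxa => hxs (hxa ▸ hx)
        have hny : y ≠ a := fun hya => hxs (hya ▸ hy)
        simp only [if_neg hnx, if_neg hny]
        exact (hf2 x hx y hy hxy).mono Set.inter_subset_left Set.inter_subset_left

lemma main_lemma (C : List ℕ → Set (ℕ → ℤ))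
    (hne : ∀ s, (C s).Nonempty) (hcpt : ∀ s, IsCompact (C s))
    (hmono : ∀ s s' : List ℕ, s <+: s' → C s' ⊆ C s)
    (hrefine : ∀ (s : List ℕ) (V : Set (ℕ → ℤ)), IsOpen V → (C s ∩ V).Nonempty →
      ∃ ℓ : ℕ, C (s ++ [ℓ]) ⊆ C s ∩ V)
    (X : Set (ℕ → ℤ))
    (hcof : ∀ s : List ℕ, ∃ s' : List ℕ, s <+: s' ∧ X ∩ C s' = ∅)
    (u : List ℕ) (V₁ : Set (ℕ → ℤ)) (hV₁ : IsOpen V₁)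
    (hnev : (C u ∩ V₁).Nonempty) (N : ℕ) (hN : (hWord u).length ≤ N) :
    ∃ q : (ℕ → ℤ) × (ℕ → Bool),
      q ∈ closure (⋃ s : List ℕ, C s ×ˢ ({hZero s} : Set (ℕ → Bool))) ∧
      q.1 ∈ V₁ ∧ (∀ i < N, q.2 i = hZero u i) ∧
      ∃ S : Set ((ℕ → ℤ) × (ℕ → Bool)), IsOpen S ∧ q ∈ S ∧
        ∀ p ∈ closure (⋃ s : List ℕ, C s ×ˢ ({hZero s} : Set (ℕ → Bool))) ∩ S, p.1 ∉ X := by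
  classical
  set D := ⋃ s : List ℕ, C s ×ˢ ({hZero s} : Set (ℕ → Bool)) with hD
  by_cases hA : ∃ m, N ≤ (hWord u).length + m ∧ (C (u ++ [m]) ∩ V₁).Nonempty
  · -- good case
    obtain ⟨m, hmN, hnem⟩ := hA
    obtain ⟨ℓ, hℓ⟩ := hrefine (u ++ [m]) V₁ hV₁ hnem
    obtain ⟨t, htpre, htX⟩ := hcof (u ++ [m] ++ [ℓ])
    have htsub : C t ⊆ C (u ++ [m] ++ [ℓ]) := hmono _ _ htpre
    obtain ⟨x, hx⟩ := hne t
    have hxV : x ∈ V₁ := (hℓ (htsub hx)).2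
    obtain ⟨r, hr⟩ := htpre
    have ht : t = u ++ m :: (ℓ :: r) := by rw [← hr]; simp
    have htCt : ∀ s'' : List ℕ, (∀ i < (hWord t).length, hZero s'' i = hZero t i) →
        C s'' ⊆ C t := by
      intro s'' hagree
      rcases hZero_char t (hWord t).length s'' le_rfl hagree with rfl | ⟨m', rest', _, rfl⟩
      · exact fun _ h => h
      · exact hmono t _ ⟨m' :: rest', rfl⟩
    refine ⟨(x, hZero t), subset_closure (Set.mem_iUnion.mpr ⟨t, by simp [hx]⟩), hxV, ?_, ?_⟩
    · intro i hi
      rw [ht]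
      exact hZero_extend_agree u m _ i (by omega)
    · refine ⟨Set.univ ×ˢ {z | ∀ i < (hWord t).length, z i = hZero t i},
        isOpen_univ.prod (isOpen_cyl _ _), ⟨trivial, fun i _ => rfl⟩, ?_⟩
      intro p hp
      have hS : IsOpen ((Set.univ : Set (ℕ → ℤ)) ×ˢ {z : ℕ → Bool | ∀ i < (hWord t).length, z i = hZero t i}) :=
        isOpen_univ.prod (isOpen_cyl _ _)
      have hp' : p ∈ ((Set.univ : Set (ℕ → ℤ)) ×ˢ {z : ℕ → Bool | ∀ i < (hWord t).length, z i = hZero t i})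
          ∩ closure D := ⟨hp.2, hp.1⟩
      have hsub : p ∈ closure (D ∩
          (Set.univ : Set (ℕ → ℤ)) ×ˢ {z : ℕ → Bool | ∀ i < (hWord t).length, z i = hZero t i}) := by
        rw [Set.inter_comm]
        exact hS.inter_closure hp'
      have hDS : D ∩ (Set.univ : Set (ℕ → ℤ)) ×ˢ {z : ℕ → Bool | ∀ i < (hWord t).length, z i = hZero t i}
          ⊆ C t ×ˢ (Set.univ : Set (ℕ → Bool)) := by
        rintro ⟨y, z⟩ ⟨hyD, -, hyS⟩
        obtain ⟨s'', hs''⟩ := Set.mem_iUnion.mp hyD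
        obtain ⟨hyC, hz⟩ := hs''
        simp only [Set.mem_singleton_iff] at hz
        refine ⟨htCt s'' ?_ hyC, trivial⟩
        intro i hi
        rw [← hz]
        exact hyS i hi
      have hmem : p ∈ C t ×ˢ (Set.univ : Set (ℕ → Bool)) := by
        have := closure_mono hDS hsub
        rwa [IsClosed.closure_eq (((hcpt t).isClosed).prod isClosed_univ)] at this
      intro hpX
      have : p.1 ∈ X ∩ C t := ⟨hpX, hmem.1⟩
      rw [htX] at this
      exact this
  · -- bad case : all far children miss V₁
    push_neg at hA
    have hA' : ∀ m, N ≤ (hWord u).length + m → C (u ++ [m]) ∩ V₁ = ∅ := hA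
    -- C u ∩ V₁ is finite
    have Ffin : (C u ∩ V₁).Finite := by
      by_contra hinf
      obtain ⟨tf, htf, hcard⟩ := Set.Infinite.exists_subset_card_eq hinf (N + 1)
      obtain ⟨f, hf1, hf2⟩ := finset_t2_sep tf
      have hex : ∀ x : ℕ → ℤ, ∃ ℓ, x ∈ tf → C (u ++ [ℓ]) ⊆ C u ∩ (f x ∩ V₁) := by
        intro x
        by_cases hx : x ∈ tf
        · obtain ⟨ℓ, hℓ⟩ := hrefine u (f x ∩ V₁) ((hf1 x hx).1.inter hV₁)
            ⟨x, (htf hx).1, (hf1 x hx).2, (htf hx).2⟩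
          exact ⟨ℓ, fun _ => hℓ⟩
        · exact ⟨0, fun h => absurd h hx⟩
      choose g hg using hex
      have hglt : ∀ x ∈ tf, g x < N := by
        intro x hx
        obtain ⟨y, hy⟩ := hne (u ++ [g x])
        have hyV : y ∈ V₁ := ((hg x hx) hy).2.2
        by_contra hge
        have : y ∈ C (u ++ [g x]) ∩ V₁ := ⟨hy, hyV⟩
        rw [hA' (g x) (by omega)] at this
        exact this
      have hinj : Set.InjOn g tf := by
        intro x hx y hy hxy
        by_contra hne'
        obtain ⟨w, hw⟩ := hne (u ++ [g x])
        have hw1 : w ∈ f x := ((hg x hx) hw).2.1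
        have hw2 : w ∈ f y := by
          have := (hg y hy)
          rw [← hxy] at this
          exact (this hw).2.1
        exact (hf2 x hx y hy hne').le_bot ⟨hw1, hw2⟩ 
      have : tf.card ≤ (Finset.range N).card := by
        apply Finset.card_le_card_of_injOn g
        · intro x hx
          exact Finset.mem_range.mpr (hglt x hx)
        · exact fun x hx y hy h => hinj hx hy h
      rw [hcard, Finset.card_range] at this
      omega
    obtain ⟨x₀, hx₀⟩ := hnev
    set V' : Set (ℕ → ℤ) := V₁ ∩ ((C u ∩ V₁) \ {x₀})ᶜ with hV'
    have hV'open : IsOpen V' :=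
      hV₁.inter (Ffin.diff : ((C u ∩ V₁) \ {x₀}).Finite).isClosed.isOpen_compl
    have hCV' : C u ∩ V' = {x₀} := by
      ext y
      constructor
      · rintro ⟨hyC, hyV₁, hyc⟩
        simp only [Set.mem_compl_iff, Set.mem_diff, Set.mem_inter_iff,
          Set.mem_singleton_iff, not_and, not_not] at hyc
        exact hyc ⟨hyC, hyV₁⟩
      · rintro rfl
        refine ⟨hx₀.1, hx₀.2, ?_⟩
        simp
    obtain ⟨ℓ₀, hℓ₀⟩ := hrefine u V' hV'open ⟨x₀, by rw [hCV']; rfl⟩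
    rw [hCV'] at hℓ₀
    obtain ⟨t, htpre, htX⟩ := hcof (u ++ [ℓ₀])
    have hx₀X : x₀ ∉ X := by
      obtain ⟨y, hy⟩ := hne t
      have : y ∈ ({x₀} : Set (ℕ → ℤ)) := hℓ₀ (hmono _ _ htpre hy)
      rw [Set.mem_singleton_iff] at this
      subst this
      intro hX
      have : y ∈ X ∩ C t := ⟨hX, hy⟩
      rw [htX] at this
      exact this
    have hx₀V' : x₀ ∈ V' := by
      have : x₀ ∈ C u ∩ V' := by rw [hCV']; rfl
      exact this.2
    refine ⟨(x₀, hZero u), subset_closure (Set.mem_iUnion.mpr ⟨u, by simp [hx₀.1]⟩),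
      hx₀.2, fun i _ => rfl, ?_⟩
    refine ⟨V' ×ˢ {z | ∀ i < N, z i = hZero u i},
      hV'open.prod (isOpen_cyl _ _), ⟨hx₀V', fun i _ => rfl⟩, ?_⟩
    intro p hp
    have hS : IsOpen (V' ×ˢ {z : ℕ → Bool | ∀ i < N, z i = hZero u i}) :=
      hV'open.prod (isOpen_cyl _ _)
    have hp' : p ∈ (V' ×ˢ {z : ℕ → Bool | ∀ i < N, z i = hZero u i}) ∩ closure D :=
      ⟨hp.2, hp.1⟩
    have hsub : p ∈ closure (D ∩ V' ×ˢ {z : ℕ → Bool | ∀ i < N, z i = hZero u i}) := by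
      rw [Set.inter_comm]
      exact hS.inter_closure hp'
    have hDS : D ∩ V' ×ˢ {z : ℕ → Bool | ∀ i < N, z i = hZero u i}
        ⊆ ({(x₀, hZero u)} : Set ((ℕ → ℤ) × (ℕ → Bool))) := by
      rintro ⟨y, z⟩ ⟨hyD, hyV', hyS⟩
      obtain ⟨s'', hs''⟩ := Set.mem_iUnion.mp hyD
      obtain ⟨hyC, hz⟩ := hs''
      simp only [Set.mem_singleton_iff] at hz
      subst hz
      have hagree : ∀ i < N, hZero s'' i = hZero u i := fun i hi => hyS i hi
      rcases hZero_char u N s'' hN hagree with rfl | ⟨m', rest', hm', rfl⟩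
      · have : y ∈ C s'' ∩ V' := ⟨hyC, hyV'⟩
        rw [hCV'] at this
        rw [Set.mem_singleton_iff] at this
        subst this
        rfl
      · exfalso
        have hyCm : y ∈ C (u ++ [m']) :=
          hmono (u ++ [m']) (u ++ m' :: rest') (by refine ⟨rest', by simp⟩) hyC
        have : y ∈ C (u ++ [m']) ∩ V₁ := ⟨hyCm, hyV'.1⟩
        rw [hA' m' hm'] at this
        exact this
    have := closure_mono hDS hsub
    rw [IsClosed.closure_eq isClosed_singleton] at this
    rw [Set.mem_singleton_iff] at this
    rw [this]
    exact hx₀X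


theorem preimage_nowhereDense_in_K0
    (C : List ℕ → Set (ℕ → ℤ))
    (hne : ∀ s, (C s).Nonempty) (hcpt : ∀ s, IsCompact (C s))
    (hmono : ∀ s s' : List ℕ, s <+: s' → C s' ⊆ C s)
    (hrefine : ∀ (s : List ℕ) (V : Set (ℕ → ℤ)), IsOpen V → (C s ∩ V).Nonempty →
      ∃ ℓ : ℕ, C (s ++ [ℓ]) ⊆ C s ∩ V)
    (X : Set (ℕ → ℤ))
    (hcof : ∀ s : List ℕ, ∃ s' : List ℕ, s <+: s' ∧ X ∩ C s' = ∅) :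
    IsNowhereDense
      ((fun p : closure (⋃ s : List ℕ, C s ×ˢ ({hZero s} : Set (ℕ → Bool))) =>
          (p : (ℕ → ℤ) × (ℕ → Bool)).1) ⁻¹' X) := by
  classical
  set D := ⋃ s : List ℕ, C s ×ˢ ({hZero s} : Set (ℕ → Bool)) with hD
  set A := ((fun p : closure D => (p : (ℕ → ℤ) × (ℕ → Bool)).1) ⁻¹' X) with hAdef
  show interior (closure A) = ∅
  rw [Set.eq_empty_iff_forall_notMem]
  intro p hp
  obtain ⟨O, hOsub, hOopen, hpO⟩ := mem_interior.mp hp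
  obtain ⟨W, hWopen, hWeq⟩ := isOpen_induced_iff.mp hOopen
  have hpW : (p : (ℕ → ℤ) × (ℕ → Bool)) ∈ W := by
    rw [← hWeq] at hpO
    exact hpO
  obtain ⟨V₁, V₂, hV₁, hV₂, hp1, hp2, hVsub⟩ :=
    isOpen_prod_iff.mp hWopen (p : (ℕ → ℤ) × (ℕ → Bool)).1 (p : (ℕ → ℤ) × (ℕ → Bool)).2 hpW
  -- density of D
  obtain ⟨d, hdVV, hdD⟩ := mem_closure_iff.mp p.2 (V₁ ×ˢ V₂) (hV₁.prod hV₂)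
    (Set.mk_mem_prod hp1 hp2)
  obtain ⟨u, hdu⟩ := Set.mem_iUnion.mp hdD
  have hd1 : d.1 ∈ C u := hdu.1
  have hd2 : d.2 = hZero u := hdu.2
  have hnev : (C u ∩ V₁).Nonempty := ⟨d.1, hd1, hdVV.1⟩
  have hzV₂ : hZero u ∈ V₂ := hd2 ▸ hdVV.2
  obtain ⟨I, uu, hIu, hIsub⟩ := isOpen_pi_iff.mp hV₂ (hZero u) hzV₂
  set N : ℕ := max (hWord u).length (I.sup id + 1) with hNdef
  have hN : (hWord u).length ≤ N := le_max_left _ _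
  have cylsub : {z : ℕ → Bool | ∀ i < N, z i = hZero u i} ⊆ V₂ := by
    intro z hz
    apply hIsub
    intro i hi
    have hilt : i < N := by
      have := Finset.le_sup (f := id) hi
      simp only [id] at this
      exact lt_of_le_of_lt (by omega) (lt_of_lt_of_le (Nat.lt_succ_of_le this) (le_max_right _ _))
    rw [hz i hilt]
    exact (hIu i hi).2
  obtain ⟨q, hqcl, hqV₁, hqagree, S, hSopen, hqS, hSavoid⟩ :=
    main_lemma C hne hcpt hmono hrefine X hcof u V₁ hV₁ hnev N hN
  have hqW : q ∈ W := hVsub (Set.mk_mem_prod hqV₁ (cylsub fun i hi => hqagree i hi))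
  have hQO : (⟨q, hqcl⟩ : closure D) ∈ O := by
    rw [← hWeq]
    exact hqW
  have hQcl : (⟨q, hqcl⟩ : closure D) ∈ closure A := hOsub hQO
  obtain ⟨a, haS, haA⟩ := mem_closure_iff.mp hQcl (Subtype.val ⁻¹' S)
    (hSopen.preimage continuous_subtype_val) hqS
  exact hSavoid a.val ⟨a.2, haS⟩ haA
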